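/- Let 0 < α < 1 and β > 0, let φ be an analytic self-map of the open unit disk D, and let g be analytic on D. Then the operator V_gC_φ, defined by (V_gC_φ f)(z) = ∫₀^z f'(φ(ξ)) g(ξ) dξ, is bounded from Z^α to Z^β if and only if g' ∈ H_{v_β}^∞ and sup_{z∈D} (1−|z|²)^β |g(z)φ'(z)| / (1−|φ(z)|²)^α < ∞. -/

import Mathlib

noncomputable section

/-- The open unit disk in the complex plane. -/
def uD : Set ℂ := Metric.ball 0 1

/-- The Zygmund-type quantity `(1-|z|^2)^a * |f''(z)|`. -/
def zygS (a : ℝ) (f : ℂ → ℂ) (z : ℂ) : ℝ := (1 - ‖z‖ ^ 2) ^ a * ‖deriv (deriv f) z‖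

/-- Membership in the Zygmund-type space `Z^a`. -/
def memZ (a : ℝ) (f : ℂ → ℂ) : Prop :=
  AnalyticOn ℂ f uD ∧ ∃ M : ℝ, ∀ z ∈ uD, zygS a f z ≤ M

/-- The Zygmund-type norm `‖f‖_{Z^a} = |f 0| + |f' 0| + sup_{z ∈ D} (1-|z|^2)^a |f''(z)|`. -/
def zNorm (a : ℝ) (f : ℂ → ℂ) : ℝ := ‖f 0‖ + ‖deriv f 0‖ + sSup (zygS a f '' uD)

/-- Membership in the weighted space `H^∞_{v_b}` (for `u` analytic on `uD`). -/
def memHv (b : ℝ) (u : ℂ → ℂ) : Prop :=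
  ∃ M : ℝ, ∀ z ∈ uD, (1 - ‖z‖ ^ 2) ^ b * ‖u z‖ ≤ M

/-- `T` is a bounded operator from `Z^a` to `Z^b`. -/
def boundedOp (a b : ℝ) (T : (ℂ → ℂ) → ℂ → ℂ) : Prop :=
  (∀ f, memZ a f → memZ b (T f)) ∧
    ∃ C > 0, ∀ f, memZ a f → zNorm b (T f) ≤ C * zNorm a f

/-- `(V_g C_φ f)(z) = ∫₀^z f'(φ(ξ)) g(ξ) dξ`, parametrized along the segment from `0` to `z`. -/
def VgCphi (g φ : ℂ → ℂ) (f : ℂ → ℂ) : ℂ → ℂ :=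
  fun z => ∫ t in (0:ℝ)..1, z * (deriv f (φ ((t : ℂ) * z)) * g ((t : ℂ) * z))

/-! ### Auxiliary lemmas -/

open Set MeasureTheory intervalIntegral Metric Interval

set_option maxHeartbeats 1000000

lemma uD_open : IsOpen uD := Metric.isOpen_ball

lemma mem_uD {z : ℂ} : z ∈ uD ↔ ‖z‖ < 1 := by
  simp [uD, Metric.mem_ball, dist_zero_right]

lemma zero_mem_uD : (0:ℂ) ∈ uD := mem_uD.mpr (by norm_num)

lemma smul_mem_uD {z : ℂ} (hz : z ∈ uD) {t : ℝ} (ht : t ∈ Icc (0:ℝ) 1) :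
    (t:ℂ) * z ∈ uD := by
  rw [mem_uD] at hz ⊢
  calc ‖(t:ℂ) * z‖ = |t| * ‖z‖ := by simp [Complex.norm_real]
    _ ≤ 1 * ‖z‖ := by
        apply mul_le_mul_of_nonneg_right _ (norm_nonneg z)
        rw [abs_of_nonneg ht.1]; exact ht.2
    _ < 1 := by simpa using hz

lemma one_sub_sq_pos {z : ℂ} (hz : z ∈ uD) : 0 < 1 - ‖z‖ ^ 2 := by
  rw [mem_uD] at hz; nlinarith [norm_nonneg z]

lemma zygS_nonneg {a : ℝ} {f : ℂ → ℂ} {z : ℂ} (hz : z ∈ uD) : 0 ≤ zygS a f z := by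
  unfold zygS
  have := one_sub_sq_pos hz
  positivity

/-- FTC along the segment from 0 to z. -/
lemma segFTC {F : ℂ → ℂ} (hF : AnalyticOnNhd ℂ F uD) {z : ℂ} (hz : z ∈ uD) :
    (∫ t in (0:ℝ)..1, z * deriv F ((t:ℂ) * z)) = F z - F 0 := by
  have key : ∀ t ∈ uIcc (0:ℝ) 1, HasDerivAt (fun s : ℝ => F ((s:ℂ) * z))
      (z * deriv F ((t:ℂ) * z)) t := by
    intro t ht
    rw [uIcc_of_le (by norm_num)] at ht
    have hmem : (t:ℂ) * z ∈ uD := smul_mem_uD hz ht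
    have h1 : HasDerivAt F (deriv F ((t:ℂ)*z)) ((t:ℂ)*z) :=
      ((hF _ hmem).differentiableAt.hasDerivAt)
    have h2 : HasDerivAt (fun s : ℝ => (s:ℂ) * z) z t := by
      simpa using (Complex.ofRealCLM.hasDerivAt (x := t)).mul_const z
    simpa [mul_comm, Function.comp_def] using h1.comp t h2
  have hcont : ContinuousOn (fun t : ℝ => z * deriv F ((t:ℂ) * z)) (uIcc (0:ℝ) 1) := by
    have hd : ContinuousOn (deriv F) uD := (hF.deriv).continuousOn
    apply ContinuousOn.mul continuousOn_const
    apply hd.comp (by fun_prop)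
    intro t ht
    rw [uIcc_of_le (by norm_num)] at ht
    exact smul_mem_uD hz ht
  have := integral_eq_sub_of_hasDerivAt key (hcont.intervalIntegrable)
  simpa using this

/-- The segment-primitive operator. -/
def Pint (h : ℂ → ℂ) : ℂ → ℂ := fun z => ∫ t in (0:ℝ)..1, z * h ((t:ℂ) * z)

lemma Pint_zero (h : ℂ → ℂ) : Pint h 0 = 0 := by simp [Pint]

lemma Pint_hasDerivAt {h : ℂ → ℂ} (hh : AnalyticOnNhd ℂ h uD) {z : ℂ} (hz : z ∈ uD) :
    HasDerivAt (Pint h) (h z) z := by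
  set r : ℝ := (1 + ‖z‖)/2 with hr
  set ε : ℝ := (1 - ‖z‖)/2 with he
  have hz1 : ‖z‖ < 1 := mem_uD.mp hz
  have hε : 0 < ε := by rw [he]; linarith
  have hr1 : r < 1 := by rw [hr]; linarith
  have hsub : closedBall (0:ℂ) r ⊆ uD := by
    intro x hx
    rw [mem_uD]
    calc ‖x‖ ≤ r := by simpa [dist_zero_right] using hx
      _ < 1 := hr1
  have hball : ∀ x ∈ ball z ε, ∀ t ∈ Icc (0:ℝ) 1, (t:ℂ) * x ∈ closedBall (0:ℂ) r := by
    intro x hx t ht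
    have hxn : ‖x‖ ≤ r := by
      have h1 : ‖x - z‖ < ε := by simpa [dist_eq_norm] using hx
      have h2 := norm_sub_norm_le x z
      rw [hr]; linarith
    simp only [mem_closedBall, dist_zero_right]
    calc ‖(t:ℂ) * x‖ = |t| * ‖x‖ := by simp [Complex.norm_real]
      _ ≤ 1 * r := by
          apply mul_le_mul (by rw [abs_of_nonneg ht.1]; exact ht.2) hxn (norm_nonneg x)
            one_pos.le
      _ = r := one_mul r
  have hcont : ContinuousOn h (closedBall (0:ℂ) r) := (hh.continuousOn).mono hsub
  have hcont' : ContinuousOn (deriv h) (closedBall (0:ℂ) r) := (hh.deriv.continuousOn).mono hsub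
  obtain ⟨C, hC⟩ := (isCompact_closedBall (0:ℂ) r).exists_bound_of_continuousOn hcont
  obtain ⟨C', hC'⟩ := (isCompact_closedBall (0:ℂ) r).exists_bound_of_continuousOn hcont'
  set F' : ℂ → ℝ → ℂ := fun x t => h ((t:ℂ)*x) + x * ((t:ℂ) * deriv h ((t:ℂ)*x)) with hF'
  have hIoc : Ι (0:ℝ) 1 ⊆ Icc (0:ℝ) 1 := by
    rw [uIoc_of_le (by norm_num)]; exact Ioc_subset_Icc_self
  have hzball : z ∈ ball z ε := mem_ball_self hε
  have hdiff : ∀ t ∈ Ι (0:ℝ) 1, ∀ x ∈ ball z ε,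
      HasDerivAt (fun x => x * h ((t:ℂ)*x)) (F' x t) x := by
    intro t ht x hx
    have hmem := hsub (hball x hx t (hIoc ht))
    have h1 : HasDerivAt h (deriv h ((t:ℂ)*x)) ((t:ℂ)*x) := (hh _ hmem).differentiableAt.hasDerivAt
    have h2 : HasDerivAt (fun y : ℂ => (t:ℂ)*y) (t:ℂ) x := by
      simpa using (hasDerivAt_id x).const_mul (t:ℂ)
    have h3 : HasDerivAt (fun y : ℂ => h ((t:ℂ)*y)) (deriv h ((t:ℂ)*x) * (t:ℂ)) x :=
      h1.comp x h2
    have h4 := (hasDerivAt_id x).mul h3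
    rw [hF']
    exact h4.congr_deriv (by simp only [id]; ring)
  have hcFx : ∀ x ∈ ball z ε, ContinuousOn (fun t : ℝ => x * h ((t:ℂ)*x)) (Icc (0:ℝ) 1) := by
    intro x hx
    exact continuousOn_const.mul (hcont.comp (by fun_prop) (fun t ht => hball x hx t ht))
  have hmeasF : ∀ᶠ x in nhds z, AEStronglyMeasurable (fun t : ℝ => x * h ((t:ℂ)*x))
      (volume.restrict (Ι (0:ℝ) 1)) := by
    filter_upwards [ball_mem_nhds z hε] with x hx
    exact ((hcFx x hx).mono hIoc).aestronglyMeasurable measurableSet_uIoc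
  have hint : IntervalIntegrable (fun t : ℝ => z * h ((t:ℂ)*z)) volume 0 1 := by
    apply ContinuousOn.intervalIntegrable
    rw [uIcc_of_le (by norm_num)]
    exact hcFx z hzball
  have hcF' : ContinuousOn (F' z) (Icc (0:ℝ) 1) := by
    rw [hF']
    apply ContinuousOn.add
    · exact hcont.comp (by fun_prop) (fun t ht => hball z hzball t ht)
    · apply ContinuousOn.mul continuousOn_const
      apply ContinuousOn.mul (by fun_prop)
      exact hcont'.comp (by fun_prop) (fun t ht => hball z hzball t ht)
  have hmeasF' : AEStronglyMeasurable (F' z) (volume.restrict (Ι (0:ℝ) 1)) :=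
    (hcF'.mono hIoc).aestronglyMeasurable measurableSet_uIoc
  have hbound : ∀ t ∈ Ι (0:ℝ) 1, ∀ x ∈ ball z ε, ‖F' x t‖ ≤ |C| + |C'| := by
    intro t ht x hx
    have ht' := hIoc ht
    have hm := hball x hx t ht'
    have h1 : ‖h ((t:ℂ)*x)‖ ≤ |C| := (hC _ hm).trans (le_abs_self C)
    have h2 : ‖x * ((t:ℂ) * deriv h ((t:ℂ)*x))‖ ≤ |C'| := by
      rw [norm_mul, norm_mul]
      have hx1 : ‖x‖ ≤ 1 := (mem_uD.mp (hsub (by simpa using hball x hx 1 (by norm_num)))).le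
      have ht1 : ‖(t:ℂ)‖ ≤ 1 := by
        rw [Complex.norm_real, Real.norm_eq_abs, abs_of_nonneg ht'.1]; exact ht'.2
      calc ‖x‖ * (‖(t:ℂ)‖ * ‖deriv h ((t:ℂ)*x)‖) ≤ 1 * (1 * |C'|) := by
            apply mul_le_mul hx1 _ (by positivity) one_pos.le
            exact mul_le_mul ht1 ((hC' _ hm).trans (le_abs_self C')) (norm_nonneg _) one_pos.le
        _ = |C'| := by ring
    calc ‖F' x t‖ ≤ ‖h ((t:ℂ)*x)‖ + ‖x * ((t:ℂ) * deriv h ((t:ℂ)*x))‖ := norm_add_le _ _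
      _ ≤ |C| + |C'| := add_le_add h1 h2
  have main := hasDerivAt_integral_of_dominated_loc_of_deriv_le (ball_mem_nhds z hε) hmeasF hint hmeasF'
    (Filter.Eventually.of_forall hbound) intervalIntegrable_const
    (Filter.Eventually.of_forall hdiff)
  have hval : (∫ t in (0:ℝ)..1, F' z t) = h z := by
    have key : ∀ t ∈ uIcc (0:ℝ) 1, HasDerivAt (fun s : ℝ => (s:ℂ) * h ((s:ℂ)*z)) (F' z t) t := by
      intro t ht
      rw [uIcc_of_le (by norm_num)] at ht
      have hmem := hsub (hball z hzball t ht)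
      have h1 : HasDerivAt h (deriv h ((t:ℂ)*z)) ((t:ℂ)*z) :=
        (hh _ hmem).differentiableAt.hasDerivAt
      have h2 : HasDerivAt (fun s : ℝ => (s:ℂ) * z) z t := by
        simpa using (Complex.ofRealCLM.hasDerivAt (x := t)).mul_const z
      have h3 : HasDerivAt (fun s : ℝ => h ((s:ℂ)*z)) (deriv h ((t:ℂ)*z) * z) t := h1.comp t h2
      have h4 : HasDerivAt (fun s : ℝ => (s:ℂ)) 1 t := Complex.ofRealCLM.hasDerivAt
      have h5 := h4.mul h3
      rw [hF']
      exact h5.congr_deriv (by beta_reduce; ring)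
    have := integral_eq_sub_of_hasDerivAt key
      ((hcF'.mono (by rw [uIcc_of_le (by norm_num)])).intervalIntegrable)
    simpa using this
  have := main.2
  rw [hval] at this
  exact this

lemma Pint_analyticOnNhd {h : ℂ → ℂ} (hh : AnalyticOnNhd ℂ h uD) :
    AnalyticOnNhd ℂ (Pint h) uD := by
  apply DifferentiableOn.analyticOnNhd _ uD_open
  intro z hz
  exact (Pint_hasDerivAt hh hz).differentiableAt.differentiableWithinAt

lemma Pint_deriv {h : ℂ → ℂ} (hh : AnalyticOnNhd ℂ h uD) {z : ℂ} (hz : z ∈ uD) :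
    deriv (Pint h) z = h z := (Pint_hasDerivAt hh hz).deriv

lemma Pint_deriv2 {h : ℂ → ℂ} (hh : AnalyticOnNhd ℂ h uD) {z : ℂ} (hz : z ∈ uD) :
    deriv (deriv (Pint h)) z = deriv h z := by
  have heq : deriv (Pint h) =ᶠ[nhds z] h :=
    Filter.eventuallyEq_of_mem (uD_open.mem_nhds hz) (fun w hw => Pint_deriv hh hw)
  exact heq.deriv_eq

/-- `∫₀¹ (1-t)^(-α) dt`. -/
def Ia (α : ℝ) : ℝ := ∫ t in (0:ℝ)..1, (1-t) ^ (-α)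

lemma Ia_integrable {α : ℝ} (hα1 : α < 1) :
    IntervalIntegrable (fun t : ℝ => (1-t) ^ (-α)) volume 0 1 := by
  have h := intervalIntegrable_rpow' (a := 0) (b := 1) (r := -α) (by linarith)
  have h2 := h.comp_sub_left 1
  simpa using h2.symm

lemma Ia_nonneg {α : ℝ} : 0 ≤ Ia α := by
  apply intervalIntegral.integral_nonneg (by norm_num)
  intro t ht
  exact Real.rpow_nonneg (by linarith [ht.2]) _

lemma ae_ne_one : ∀ᵐ t : ℝ ∂volume, t ≠ 1 := by
  rw [MeasureTheory.ae_iff]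
  have : {a : ℝ | ¬ a ≠ 1} = {1} := by ext x; simp
  rw [this]
  exact Real.volume_singleton

/-- If `zygS α f ≤ S` on `uD` then `‖f'(w)‖ ≤ ‖f'(0)‖ + S * Ia α` on `uD`. -/
lemma deriv_bound {f : ℂ → ℂ} (hf : AnalyticOnNhd ℂ f uD) {α S : ℝ} (hα0 : 0 < α)
    (hα1 : α < 1) (hS : ∀ z ∈ uD, zygS α f z ≤ S) {w : ℂ} (hw : w ∈ uD) :
    ‖deriv f w‖ ≤ ‖deriv f 0‖ + S * Ia α := by
  have hS0 : 0 ≤ S := le_trans (zygS_nonneg zero_mem_uD) (hS 0 zero_mem_uD)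
  have hFTC := segFTC (hf.deriv) hw
  have hIoc : Ι (0:ℝ) 1 ⊆ Icc (0:ℝ) 1 := by
    rw [uIoc_of_le (by norm_num)]; exact Ioc_subset_Icc_self
  have hae : ∀ᵐ (t : ℝ) ∂volume.restrict (Ι (0:ℝ) 1),
      ‖w * deriv (deriv f) ((t:ℂ) * w)‖ ≤ S * (1-t) ^ (-α) := by
    filter_upwards [ae_restrict_of_ae ae_ne_one, ae_restrict_mem measurableSet_uIoc]
      with t ht1 ht2
    have ht := hIoc ht2
    have htlt : t < 1 := lt_of_le_of_ne ht.2 ht1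
    have hmem : (t:ℂ) * w ∈ uD := smul_mem_uD hw ht
    have hpos : 0 < 1 - ‖(t:ℂ)*w‖^2 := one_sub_sq_pos hmem
    have hle : 1 - t ≤ 1 - ‖(t:ℂ)*w‖^2 := by
      have heq : ‖(t:ℂ)*w‖^2 = t^2 * ‖w‖^2 := by
        rw [norm_mul, Complex.norm_real, Real.norm_eq_abs, mul_pow, sq_abs]
      rw [heq]
      have hw1 : ‖w‖ ^ 2 ≤ 1 := by
        have := (mem_uD.mp hw).le
        nlinarith [norm_nonneg w]
      have ht2' : t ^ 2 ≤ t := by nlinarith [ht.1, ht.2]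
      nlinarith [sq_nonneg t]
    have hzy := hS _ hmem
    unfold zygS at hzy
    have hd : ‖deriv (deriv f) ((t:ℂ)*w)‖ ≤ S * (1 - ‖(t:ℂ)*w‖^2) ^ (-α) := by
      rw [Real.rpow_neg hpos.le, ← div_eq_mul_inv,
        le_div_iff₀ (Real.rpow_pos_of_pos hpos α)]
      calc ‖deriv (deriv f) ((t:ℂ)*w)‖ * (1 - ‖(t:ℂ)*w‖^2) ^ α
          = (1 - ‖(t:ℂ)*w‖^2) ^ α * ‖deriv (deriv f) ((t:ℂ)*w)‖ := mul_comm _ _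
        _ ≤ S := hzy
    have hmono : (1 - ‖(t:ℂ)*w‖^2) ^ (-α) ≤ (1-t) ^ (-α) :=
      Real.rpow_le_rpow_of_nonpos (by linarith) hle (by linarith)
    calc ‖w * deriv (deriv f) ((t:ℂ)*w)‖ = ‖w‖ * ‖deriv (deriv f) ((t:ℂ)*w)‖ := norm_mul _ _
      _ ≤ 1 * (S * (1 - ‖(t:ℂ)*w‖^2) ^ (-α)) := by
          apply mul_le_mul (mem_uD.mp hw).le hd (norm_nonneg _) one_pos.le
      _ = S * (1 - ‖(t:ℂ)*w‖^2) ^ (-α) := one_mul _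
      _ ≤ S * (1-t) ^ (-α) := mul_le_mul_of_nonneg_left hmono hS0
  have hBint : IntervalIntegrable (fun t : ℝ => S * (1-t) ^ (-α)) volume 0 1 :=
    (Ia_integrable hα1).const_mul S
  have hnorm := intervalIntegral.norm_integral_le_abs_of_norm_le hae hBint
  rw [hFTC] at hnorm
  have hval : (∫ t in (0:ℝ)..1, S * (1-t) ^ (-α)) = S * Ia α := by
    rw [Ia, intervalIntegral.integral_const_mul]
  rw [hval, abs_of_nonneg (mul_nonneg hS0 Ia_nonneg)] at hnorm
  calc ‖deriv f w‖ = ‖deriv f 0 + (deriv f w - deriv f 0)‖ := by ring_nf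
    _ ≤ ‖deriv f 0‖ + ‖deriv f w - deriv f 0‖ := norm_add_le _ _
    _ ≤ ‖deriv f 0‖ + S * Ia α := by linarith

section Vlemmas

variable {φ g f : ℂ → ℂ}

lemma hV_analytic (hf : AnalyticOnNhd ℂ f uD) (hφ : AnalyticOnNhd ℂ φ uD)
    (hφm : Set.MapsTo φ uD uD) (hg : AnalyticOnNhd ℂ g uD) :
    AnalyticOnNhd ℂ (fun w => deriv f (φ w) * g w) uD :=
  ((hf.deriv).comp hφ hφm).mul hg

lemma V_eq_Pint : VgCphi g φ f = Pint (fun w => deriv f (φ w) * g w) := rfl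

lemma V_deriv (hf : AnalyticOnNhd ℂ f uD) (hφ : AnalyticOnNhd ℂ φ uD)
    (hφm : Set.MapsTo φ uD uD) (hg : AnalyticOnNhd ℂ g uD) {z : ℂ} (hz : z ∈ uD) :
    deriv (VgCphi g φ f) z = deriv f (φ z) * g z := by
  rw [V_eq_Pint]
  exact Pint_deriv (hV_analytic hf hφ hφm hg) hz

lemma V_deriv2 (hf : AnalyticOnNhd ℂ f uD) (hφ : AnalyticOnNhd ℂ φ uD)
    (hφm : Set.MapsTo φ uD uD) (hg : AnalyticOnNhd ℂ g uD) {z : ℂ} (hz : z ∈ uD) :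
    deriv (deriv (VgCphi g φ f)) z =
      deriv (deriv f) (φ z) * deriv φ z * g z + deriv f (φ z) * deriv g z := by
  rw [V_eq_Pint]
  rw [Pint_deriv2 (hV_analytic hf hφ hφm hg) hz]
  have hφz : φ z ∈ uD := hφm hz
  have h1 : HasDerivAt (deriv f) (deriv (deriv f) (φ z)) (φ z) :=
    ((hf.deriv) _ hφz).differentiableAt.hasDerivAt
  have h2 : HasDerivAt φ (deriv φ z) z := (hφ _ hz).differentiableAt.hasDerivAt
  have h3 : HasDerivAt (fun y => deriv f (φ y)) (deriv (deriv f) (φ z) * deriv φ z) z :=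
    h1.comp z h2
  have h4 : HasDerivAt g (deriv g z) z := (hg _ hz).differentiableAt.hasDerivAt
  exact (h3.mul h4).deriv

lemma V_analytic (hf : AnalyticOnNhd ℂ f uD) (hφ : AnalyticOnNhd ℂ φ uD)
    (hφm : Set.MapsTo φ uD uD) (hg : AnalyticOnNhd ℂ g uD) :
    AnalyticOnNhd ℂ (VgCphi g φ f) uD := by
  rw [V_eq_Pint]
  exact Pint_analyticOnNhd (hV_analytic hf hφ hφm hg)

end Vlemmas

/-- test symbol -/
def ha (α : ℝ) (a : ℂ) : ℂ → ℂ :=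
  fun w => ((1 - ‖a‖^2 : ℝ) : ℂ) * (1 - (starRingEnd ℂ) a * w) ^ ((-(α+1) : ℝ) : ℂ)

lemma base_norm_ge {a w : ℂ} (ha' : a ∈ uD) (hw : w ∈ uD) :
    1 - ‖a‖ * ‖w‖ ≤ ‖1 - (starRingEnd ℂ) a * w‖ ∧ 0 < 1 - ‖a‖ * ‖w‖ := by
  constructor
  · have h1 := norm_sub_norm_le (1:ℂ) ((starRingEnd ℂ) a * w)
    have h2 : ‖(starRingEnd ℂ) a * w‖ = ‖a‖ * ‖w‖ := by
      rw [norm_mul]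
      simp [Complex.norm_conj]
    rw [h2] at h1
    simpa using h1
  · have ha1 : ‖a‖ < 1 := mem_uD.mp ha'
    have hw1 : ‖w‖ < 1 := mem_uD.mp hw
    nlinarith [norm_nonneg a, norm_nonneg w]

lemma base_re_pos {a w : ℂ} (ha' : a ∈ uD) (hw : w ∈ uD) :
    0 < (1 - (starRingEnd ℂ) a * w).re := by
  have h2 : ‖(starRingEnd ℂ) a * w‖ = ‖a‖ * ‖w‖ := by
    rw [norm_mul]; simp [Complex.norm_conj]
  have h3 : ((starRingEnd ℂ) a * w).re ≤ ‖a‖ * ‖w‖ := by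
    rw [← h2]
    exact (Complex.re_le_norm _)
  have := (base_norm_ge ha' hw).2
  simp only [Complex.sub_re, Complex.one_re]
  linarith

lemma base_ne_zero {a w : ℂ} (ha' : a ∈ uD) (hw : w ∈ uD) :
    (1 - (starRingEnd ℂ) a * w) ≠ 0 := by
  intro h
  have := base_re_pos ha' hw
  rw [h] at this
  simp at this

lemma ha_analytic {α : ℝ} {a : ℂ} (ha' : a ∈ uD) : AnalyticOnNhd ℂ (ha α a) uD := by
  apply DifferentiableOn.analyticOnNhd _ Metric.isOpen_ball
  intro w hw
  apply DifferentiableAt.differentiableWithinAt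
  apply DifferentiableAt.const_mul
  exact DifferentiableAt.cpow
    ((differentiableAt_const (1:ℂ)).sub ((differentiableAt_id).const_mul _))
    (differentiableAt_const _)
    (Complex.mem_slitPlane_iff.mpr (Or.inl (base_re_pos ha' hw)))

lemma ha_norm {α : ℝ} {a w : ℂ} (ha' : a ∈ uD) (hw : w ∈ uD) :
    ‖ha α a w‖ = (1 - ‖a‖^2) * ‖1 - (starRingEnd ℂ) a * w‖ ^ (-(α+1)) := by
  unfold ha
  rw [norm_mul]
  congr 1
  · rw [Complex.norm_real, Real.norm_eq_abs, abs_of_pos (one_sub_sq_pos ha')]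
  · rw [Complex.norm_cpow_of_ne_zero (base_ne_zero ha' hw)]
    simp

lemma ha_bound {α : ℝ} (hα0 : 0 < α) {a w : ℂ} (ha' : a ∈ uD) (hw : w ∈ uD) :
    (1 - ‖w‖^2) ^ α * ‖ha α a w‖ ≤ 2 ^ α * 2 := by
  have hw1 : ‖w‖ < 1 := mem_uD.mp hw
  have ha1 : ‖a‖ < 1 := mem_uD.mp ha'
  set P : ℝ := 1 - ‖w‖ with hPdef
  set Q : ℝ := 1 + ‖w‖ with hQdef
  set R : ℝ := 1 - ‖a‖ with hRdef
  set T : ℝ := 1 + ‖a‖ with hTdef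
  set X : ℝ := ‖1 - (starRingEnd ℂ) a * w‖ with hXdef
  have hP : 0 < P := by rw [hPdef]; linarith
  have hQ0 : 0 < Q := by rw [hQdef]; linarith [norm_nonneg w]
  have hQ : Q ≤ 2 := by rw [hQdef]; linarith
  have hR : 0 < R := by rw [hRdef]; linarith
  have hT0 : 0 ≤ T := by rw [hTdef]; linarith [norm_nonneg a]
  have hT : T ≤ 2 := by rw [hTdef]; linarith
  obtain ⟨hge, hpos⟩ := base_norm_ge ha' hw
  have hX : 0 < X := lt_of_lt_of_le hpos hge
  have hXP : P ≤ X := by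
    apply le_trans _ hge
    rw [hPdef]
    have : ‖a‖ * ‖w‖ ≤ ‖w‖ := by nlinarith [norm_nonneg w]
    linarith
  have hXR : R ≤ X := by
    apply le_trans _ hge
    rw [hRdef]
    have : ‖a‖ * ‖w‖ ≤ ‖a‖ := by nlinarith [norm_nonneg a]
    linarith
  rw [ha_norm ha' hw]
  have h1 : 1 - ‖w‖^2 = P * Q := by rw [hPdef, hQdef]; ring
  have h2 : 1 - ‖a‖^2 = R * T := by rw [hRdef, hTdef]; ring
  rw [h1, h2, ← hXdef]
  have key : P ^ α * R ≤ X ^ (α + 1) := by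
    rw [Real.rpow_add hX, Real.rpow_one]
    exact mul_le_mul (Real.rpow_le_rpow hP.le hXP hα0.le) hXR hR.le
      (Real.rpow_nonneg hX.le α)
  have hinv : X ^ (-(α+1)) ≤ (P ^ α * R)⁻¹ := by
    rw [Real.rpow_neg hX.le]
    exact inv_anti₀ (by positivity) key
  calc (P*Q) ^ α * (R * T * X ^ (-(α+1)))
      ≤ (P*Q) ^ α * (R * T * (P ^ α * R)⁻¹) := by
        apply mul_le_mul_of_nonneg_left _ (Real.rpow_nonneg (by positivity) α)
        exact mul_le_mul_of_nonneg_left hinv (by positivity)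
    _ = Q ^ α * T := by
        rw [Real.mul_rpow hP.le hQ0.le]
        have hPα : P ^ α ≠ 0 := ne_of_gt (Real.rpow_pos_of_pos hP α)
        field_simp
    _ ≤ 2 ^ α * 2 := by
        apply mul_le_mul (Real.rpow_le_rpow hQ0.le hQ hα0.le) hT hT0
          (Real.rpow_nonneg (by norm_num) α)

lemma ha_at_self {α : ℝ} (hα0 : 0 < α) {a : ℂ} (ha' : a ∈ uD) :
    ‖ha α a a‖ = (1 - ‖a‖^2) ^ (-α) := by
  have hpos : 0 < 1 - ‖a‖^2 := one_sub_sq_pos ha'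
  have hb : (1 : ℂ) - (starRingEnd ℂ) a * a = ((1 - ‖a‖^2 : ℝ) : ℂ) := by
    rw [mul_comm, Complex.mul_conj]
    push_cast
    rw [Complex.normSq_eq_norm_sq]
    simp
  have hcn : ‖((1 - ‖a‖^2 : ℝ) : ℂ) ^ ((-(α+1):ℝ):ℂ)‖ = (1-‖a‖^2) ^ (-(α+1)) := by
    rw [Complex.norm_cpow_eq_rpow_re_of_pos hpos]
    simp
  unfold ha
  rw [hb, norm_mul, hcn, Complex.norm_real, Real.norm_eq_abs, abs_of_pos hpos]
  rw [← Real.rpow_one_add' hpos.le (by intro h; simp at h; linarith)]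
  norm_num


theorem stmt_0 (α β : ℝ) (hα0 : 0 < α) (hα1 : α < 1) (hβ : 0 < β)
    (φ g : ℂ → ℂ) (hφ : AnalyticOn ℂ φ uD) (hφm : Set.MapsTo φ uD uD)
    (hg : AnalyticOn ℂ g uD) :
    boundedOp α β (VgCphi g φ) ↔
      (memHv β (deriv g) ∧ (∃ M : ℝ, ∀ z ∈ uD, (1 - ‖z‖ ^ 2) ^ β * ‖g z * deriv φ z‖ / (1 - ‖φ z‖ ^ 2) ^ α ≤ M)) := by
  have hφN : AnalyticOnNhd ℂ φ uD := (uD_open.analyticOn_iff_analyticOnNhd).mp hφ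
  have hgN : AnalyticOnNhd ℂ g uD := (uD_open.analyticOn_iff_analyticOnNhd).mp hg
  have ht0le : ∀ z ∈ uD, (1 - ‖z‖ ^ 2) ^ β ≤ 1 := by
    intro z hz
    apply Real.rpow_le_one (one_sub_sq_pos hz).le _ hβ.le
    nlinarith [sq_nonneg ‖z‖]
  constructor
  · rintro ⟨hmap, C, hC0, hCle⟩
    -- Part 1 : g' ∈ H^∞_{v_β}, via the test function f(w) = w
    have hfId : memZ α (fun w : ℂ => w) := by
      constructor
      · exact (uD_open.analyticOn_iff_analyticOnNhd).mpr analyticOnNhd_id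
      · refine ⟨0, fun z hz => ?_⟩
        have h1 : deriv (deriv (fun w : ℂ => w)) z = 0 := by
          have h2 : deriv (fun w : ℂ => w) = fun _ => (1:ℂ) := funext fun x => deriv_id x
          rw [h2, deriv_const]
        unfold zygS; rw [h1]; simp
    obtain ⟨hVA, M₁, hM₁'⟩ := hmap _ hfId
    have hVid2 : ∀ z ∈ uD, deriv (deriv (VgCphi g φ (fun w : ℂ => w))) z = deriv g z := by
      intro z hz
      rw [V_deriv2 analyticOnNhd_id hφN hφm hgN hz]
      have h2 : deriv (fun w : ℂ => w) = fun _ => (1:ℂ) := funext fun x => deriv_id x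
      rw [h2, deriv_const]
      simp
    have hM₁ : ∀ z ∈ uD, (1 - ‖z‖ ^ 2) ^ β * ‖deriv g z‖ ≤ M₁ := by
      intro z hz
      have h3 := hM₁' z hz
      unfold zygS at h3
      rwa [hVid2 z hz] at h3
    refine ⟨⟨M₁, hM₁⟩, ?_⟩
    -- Part 2 : the weighted bound on `g·φ'`, via the test functions fa
    set K₀ : ℝ := 2 ^ α * 2 with hK₀def
    have hK₀pos : 0 < K₀ := by
      rw [hK₀def]; positivity
    refine ⟨C * K₀ + K₀ * Ia α * M₁, fun z hz => ?_⟩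
    set a : ℂ := φ z with hadef
    have ha' : a ∈ uD := hφm hz
    set fa : ℂ → ℂ := Pint (Pint (ha α a)) with hfadef
    have haN : AnalyticOnNhd ℂ (ha α a) uD := ha_analytic ha'
    have hPaN : AnalyticOnNhd ℂ (Pint (ha α a)) uD := Pint_analyticOnNhd haN
    have hfaN : AnalyticOnNhd ℂ fa uD := Pint_analyticOnNhd hPaN
    have hfad1 : ∀ w ∈ uD, deriv fa w = Pint (ha α a) w := fun w hw => Pint_deriv hPaN hw
    have hfad2 : ∀ w ∈ uD, deriv (deriv fa) w = ha α a w := by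
      intro w hw
      rw [hfadef, Pint_deriv2 hPaN hw, Pint_deriv haN hw]
    have hfa0 : deriv fa 0 = 0 := by
      rw [hfad1 0 zero_mem_uD, Pint_zero]
    have hzygfa : ∀ w ∈ uD, zygS α fa w ≤ K₀ := by
      intro w hw
      unfold zygS
      rw [hfad2 w hw]
      exact ha_bound hα0 ha' hw
    have hfaZ : memZ α fa := ⟨(uD_open.analyticOn_iff_analyticOnNhd).mpr hfaN, K₀, hzygfa⟩
    have hfaNorm : zNorm α fa ≤ K₀ := by
      unfold zNorm
      rw [show fa 0 = 0 from Pint_zero _, hfa0]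
      simp only [norm_zero, zero_add]
      exact Real.sSup_le (by rintro x ⟨w, hw, rfl⟩; exact hzygfa w hw) hK₀pos.le
    obtain ⟨hVfaA, Mfa, hMfa⟩ := hmap _ hfaZ
    have hbddV : BddAbove (zygS β (VgCphi g φ fa) '' uD) :=
      ⟨Mfa, by rintro x ⟨w, hw, rfl⟩; exact hMfa w hw⟩
    have hzyg_le : zygS β (VgCphi g φ fa) z ≤ C * K₀ := by
      calc zygS β (VgCphi g φ fa) z ≤ sSup (zygS β (VgCphi g φ fa) '' uD) :=
            le_csSup hbddV (Set.mem_image_of_mem _ hz)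
        _ ≤ zNorm β (VgCphi g φ fa) := by
            unfold zNorm
            have := norm_nonneg (VgCphi g φ fa 0)
            have := norm_nonneg (deriv (VgCphi g φ fa) 0)
            linarith
        _ ≤ C * zNorm α fa := hCle _ hfaZ
        _ ≤ C * K₀ := mul_le_mul_of_nonneg_left hfaNorm hC0.le
    have hPb : ‖Pint (ha α a) a‖ ≤ K₀ * Ia α := by
      have h4 := deriv_bound hfaN hα0 hα1 hzygfa ha'
      rwa [hfad1 a ha', hfa0, norm_zero, zero_add] at h4
    have hsecond : deriv (deriv (VgCphi g φ fa)) z =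
        ha α a a * deriv φ z * g z + Pint (ha α a) a * deriv g z := by
      rw [V_deriv2 hfaN hφN hφm hgN hz, hfad2 _ ha', hfad1 _ ha']
    -- put the pieces together
    have hM₁0 : 0 ≤ M₁ := by
      have := hM₁ 0 zero_mem_uD
      have h5 : (0:ℝ) ≤ (1 - ‖(0:ℂ)‖ ^ 2) ^ β * ‖deriv g 0‖ :=
        mul_nonneg (Real.rpow_nonneg (one_sub_sq_pos zero_mem_uD).le β) (norm_nonneg _)
      linarith
    set t0 : ℝ := (1 - ‖z‖ ^ 2) ^ β with ht0def
    have ht0pos : 0 < t0 := Real.rpow_pos_of_pos (one_sub_sq_pos hz) β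
    have ht1 : t0 ≤ 1 := ht0le z hz
    have hzygval : zygS β (VgCphi g φ fa) z =
        t0 * ‖ha α a a * deriv φ z * g z + Pint (ha α a) a * deriv g z‖ := by
      unfold zygS
      rw [hsecond]
    have hlow : t0 * ‖ha α a a * deriv φ z * g z‖
        ≤ zygS β (VgCphi g φ fa) z + t0 * ‖Pint (ha α a) a * deriv g z‖ := by
      rw [hzygval]
      have h6 := norm_add_le (ha α a a * deriv φ z * g z + Pint (ha α a) a * deriv g z)
        (-(Pint (ha α a) a * deriv g z))
      simp only [add_neg_cancel_right, norm_neg] at h6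
      nlinarith [ht0pos.le, norm_nonneg (ha α a a * deriv φ z * g z),
        norm_nonneg (Pint (ha α a) a * deriv g z)]
    have hterm2 : t0 * ‖Pint (ha α a) a * deriv g z‖ ≤ K₀ * Ia α * M₁ := by
      rw [norm_mul]
      calc t0 * (‖Pint (ha α a) a‖ * ‖deriv g z‖)
          = ‖Pint (ha α a) a‖ * (t0 * ‖deriv g z‖) := by ring
        _ ≤ (K₀ * Ia α) * M₁ := by
            apply mul_le_mul hPb (hM₁ z hz) (mul_nonneg ht0pos.le (norm_nonneg _))
              (mul_nonneg hK₀pos.le Ia_nonneg)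
    have hAnorm : ‖ha α a a * deriv φ z * g z‖ =
        (1 - ‖a‖ ^ 2) ^ (-α) * ‖g z * deriv φ z‖ := by
      rw [norm_mul, norm_mul, norm_mul, ha_at_self hα0 ha']
      ring
    have hgoal : t0 * ‖g z * deriv φ z‖ / (1 - ‖φ z‖ ^ 2) ^ α
        = t0 * ‖ha α a a * deriv φ z * g z‖ := by
      rw [hAnorm, ← hadef, div_eq_mul_inv, ← Real.rpow_neg (one_sub_sq_pos ha').le]
      ring
    rw [ht0def] at hgoal
    rw [hgoal, ← ht0def]
    calc t0 * ‖ha α a a * deriv φ z * g z‖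
        ≤ zygS β (VgCphi g φ fa) z + t0 * ‖Pint (ha α a) a * deriv g z‖ := hlow
      _ ≤ C * K₀ + K₀ * Ia α * M₁ := add_le_add hzyg_le hterm2
  · rintro ⟨⟨M₁, hM₁⟩, M₂, hM₂⟩
    have hM₁0 : 0 ≤ M₁ := by
      have := hM₁ 0 zero_mem_uD
      have h5 : (0:ℝ) ≤ (1 - ‖(0:ℂ)‖ ^ 2) ^ β * ‖deriv g 0‖ :=
        mul_nonneg (Real.rpow_nonneg (one_sub_sq_pos zero_mem_uD).le β) (norm_nonneg _)
      linarith
    have hM₂0 : 0 ≤ M₂ := by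
      have := hM₂ 0 zero_mem_uD
      have h5 : (0:ℝ) ≤ (1 - ‖(0:ℂ)‖ ^ 2) ^ β * ‖g 0 * deriv φ 0‖ /
          (1 - ‖φ 0‖ ^ 2) ^ α := by
        apply div_nonneg
          (mul_nonneg (Real.rpow_nonneg (one_sub_sq_pos zero_mem_uD).le β) (norm_nonneg _))
        exact (Real.rpow_pos_of_pos (one_sub_sq_pos (hφm zero_mem_uD)) α).le
      linarith
    -- main estimates, for any f in the Zygmund class
    have key : ∀ f, memZ α f →
        (∀ w ∈ uD, ‖deriv f w‖ ≤ ‖deriv f 0‖ + sSup (zygS α f '' uD) * Ia α) ∧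
        (∀ z ∈ uD, zygS β (VgCphi g φ f) z ≤
          sSup (zygS α f '' uD) * M₂ +
            (‖deriv f 0‖ + sSup (zygS α f '' uD) * Ia α) * M₁) := by
      intro f hf
      obtain ⟨hfA, Mf, hMf⟩ := hf
      have hfN : AnalyticOnNhd ℂ f uD := (uD_open.analyticOn_iff_analyticOnNhd).mp hfA
      set S : ℝ := sSup (zygS α f '' uD) with hSdef
      have hbdd : BddAbove (zygS α f '' uD) := ⟨Mf, by rintro x ⟨w, hw, rfl⟩; exact hMf w hw⟩
      have hSz : ∀ w ∈ uD, zygS α f w ≤ S := fun w hw =>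
        le_csSup hbdd (Set.mem_image_of_mem _ hw)
      have hS0 : 0 ≤ S := Real.sSup_nonneg (by rintro x ⟨w, hw, rfl⟩; exact zygS_nonneg hw)
      have hf' : ∀ w ∈ uD, ‖deriv f w‖ ≤ ‖deriv f 0‖ + S * Ia α :=
        fun w hw => deriv_bound hfN hα0 hα1 hSz hw
      refine ⟨hf', fun z hz => ?_⟩
      have hφz : φ z ∈ uD := hφm hz
      set t0 : ℝ := (1 - ‖z‖ ^ 2) ^ β with ht0def
      have ht0pos : 0 < t0 := Real.rpow_pos_of_pos (one_sub_sq_pos hz) β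
      have hwpos : 0 < (1 - ‖φ z‖ ^ 2) ^ α := Real.rpow_pos_of_pos (one_sub_sq_pos hφz) α
      have hexp : zygS β (VgCphi g φ f) z =
          t0 * ‖deriv (deriv f) (φ z) * deriv φ z * g z + deriv f (φ z) * deriv g z‖ := by
        unfold zygS
        rw [V_deriv2 hfN hφN hφm hgN hz]
      rw [hexp]
      have htri : ‖deriv (deriv f) (φ z) * deriv φ z * g z + deriv f (φ z) * deriv g z‖ ≤
          ‖deriv (deriv f) (φ z) * deriv φ z * g z‖ + ‖deriv f (φ z) * deriv g z‖ :=
        norm_add_le _ _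
      have hterm1 : t0 * ‖deriv (deriv f) (φ z) * deriv φ z * g z‖ ≤ S * M₂ := by
        have hA := hM₂ z hz
        have hZ := hSz (φ z) hφz
        have hZ0 := zygS_nonneg hφz (a := α) (f := f)
        have hA0 : 0 ≤ (1 - ‖z‖ ^ 2) ^ β * ‖g z * deriv φ z‖ / (1 - ‖φ z‖ ^ 2) ^ α :=
          div_nonneg (mul_nonneg (Real.rpow_nonneg (one_sub_sq_pos hz).le β) (norm_nonneg _))
            hwpos.le
        have hprod : t0 * ‖deriv (deriv f) (φ z) * deriv φ z * g z‖ =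
            ((1 - ‖z‖ ^ 2) ^ β * ‖g z * deriv φ z‖ / (1 - ‖φ z‖ ^ 2) ^ α) *
              zygS α f (φ z) := by
          have hXne : ((1 - ‖φ z‖ ^ 2) ^ α : ℝ) ≠ 0 := ne_of_gt hwpos
          have hcancel : ∀ aa bb : ℝ,
              aa / ((1 - ‖φ z‖ ^ 2) ^ α) * ((1 - ‖φ z‖ ^ 2) ^ α * bb) = aa * bb := by
            intro aa bb
            have hXne' : ((1 - ‖φ z‖ ^ 2) ^ α : ℝ) ≠ 0 := hXne
            field_simp
          unfold zygS
          rw [hcancel, norm_mul, norm_mul, norm_mul, ← ht0def]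
          ring
        rw [hprod]
        calc ((1 - ‖z‖ ^ 2) ^ β * ‖g z * deriv φ z‖ / (1 - ‖φ z‖ ^ 2) ^ α) * zygS α f (φ z)
            ≤ M₂ * S := mul_le_mul hA hZ hZ0 hM₂0
          _ = S * M₂ := mul_comm _ _
      have hterm2 : t0 * ‖deriv f (φ z) * deriv g z‖ ≤ (‖deriv f 0‖ + S * Ia α) * M₁ := by
        rw [norm_mul]
        calc t0 * (‖deriv f (φ z)‖ * ‖deriv g z‖)
            = ‖deriv f (φ z)‖ * (t0 * ‖deriv g z‖) := by ring
          _ ≤ (‖deriv f 0‖ + S * Ia α) * M₁ := by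
              apply mul_le_mul (hf' (φ z) hφz) (hM₁ z hz)
                (mul_nonneg ht0pos.le (norm_nonneg _))
                (add_nonneg (norm_nonneg _) (mul_nonneg hS0 Ia_nonneg))
      nlinarith [ht0pos.le, norm_nonneg (deriv (deriv f) (φ z) * deriv φ z * g z),
        norm_nonneg (deriv f (φ z) * deriv g z)]
    -- assemble boundedness
    set Cb : ℝ := (1 + Ia α) * ‖g 0‖ + M₂ + M₁ * (1 + Ia α) + 1 with hCbdef
    have hIa := Ia_nonneg (α := α)
    have hCb1 : 1 ≤ Cb := by
      rw [hCbdef]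
      have h7 : 0 ≤ (1 + Ia α) * ‖g 0‖ := by positivity
      have h8 : 0 ≤ M₁ * (1 + Ia α) := by positivity
      linarith
    constructor
    · intro f hf
      obtain ⟨hfA, Mf, hMf⟩ := hf
      have hfN : AnalyticOnNhd ℂ f uD := (uD_open.analyticOn_iff_analyticOnNhd).mp hfA
      refine ⟨(uD_open.analyticOn_iff_analyticOnNhd).mpr (V_analytic hfN hφN hφm hgN), _,
        (key f ⟨hfA, Mf, hMf⟩).2⟩
    · refine ⟨Cb, by linarith, fun f hf => ?_⟩
      obtain ⟨hf'bd, hzygbd⟩ := key f hf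
      obtain ⟨hfA, Mf, hMf⟩ := hf
      have hfN : AnalyticOnNhd ℂ f uD := (uD_open.analyticOn_iff_analyticOnNhd).mp hfA
      set S : ℝ := sSup (zygS α f '' uD) with hSdef
      have hS0 : 0 ≤ S := Real.sSup_nonneg (by rintro x ⟨w, hw, rfl⟩; exact zygS_nonneg hw)
      set N : ℝ := zNorm α f with hNdef
      have hSN : S ≤ N := by
        rw [hNdef]; unfold zNorm
        have := norm_nonneg (f 0); have := norm_nonneg (deriv f 0)
        rw [← hSdef]; linarith
      have hdN : ‖deriv f 0‖ ≤ N := by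
        rw [hNdef]; unfold zNorm
        have := norm_nonneg (f 0); rw [← hSdef]; linarith
      have hN0 : 0 ≤ N := le_trans hS0 hSN
      have hV0 : VgCphi g φ f 0 = 0 := by rw [V_eq_Pint]; exact Pint_zero _
      have hVd0 : ‖deriv (VgCphi g φ f) 0‖ ≤ N * ((1 + Ia α) * ‖g 0‖) := by
        rw [V_deriv hfN hφN hφm hgN zero_mem_uD, norm_mul]
        calc ‖deriv f (φ 0)‖ * ‖g 0‖ ≤ (‖deriv f 0‖ + S * Ia α) * ‖g 0‖ := by
              apply mul_le_mul_of_nonneg_right (hf'bd (φ 0) (hφm zero_mem_uD)) (norm_nonneg _)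
          _ ≤ (N + N * Ia α) * ‖g 0‖ := by
              apply mul_le_mul_of_nonneg_right _ (norm_nonneg _)
              have : S * Ia α ≤ N * Ia α := mul_le_mul_of_nonneg_right hSN hIa
              linarith
          _ = N * ((1 + Ia α) * ‖g 0‖) := by ring
      have hsupV : sSup (zygS β (VgCphi g φ f) '' uD) ≤ N * (M₂ + M₁ * (1 + Ia α)) := by
        apply Real.sSup_le
        · rintro x ⟨w, hw, rfl⟩
          calc zygS β (VgCphi g φ f) w ≤ S * M₂ + (‖deriv f 0‖ + S * Ia α) * M₁ :=
                hzygbd w hw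
            _ ≤ N * M₂ + (N + N * Ia α) * M₁ := by
                have h1 : S * M₂ ≤ N * M₂ := mul_le_mul_of_nonneg_right hSN hM₂0
                have h2 : S * Ia α ≤ N * Ia α := mul_le_mul_of_nonneg_right hSN hIa
                have h3 : (‖deriv f 0‖ + S * Ia α) * M₁ ≤ (N + N * Ia α) * M₁ := by
                  apply mul_le_mul_of_nonneg_right _ hM₁0
                  linarith
                linarith
            _ = N * (M₂ + M₁ * (1 + Ia α)) := by ring
        · exact mul_nonneg hN0 (add_nonneg hM₂0 (mul_nonneg hM₁0 (by linarith)))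
      calc zNorm β (VgCphi g φ f)
          = ‖VgCphi g φ f 0‖ + ‖deriv (VgCphi g φ f) 0‖ +
              sSup (zygS β (VgCphi g φ f) '' uD) := rfl
        _ ≤ 0 + N * ((1 + Ia α) * ‖g 0‖) + N * (M₂ + M₁ * (1 + Ia α)) := by
            rw [hV0, norm_zero]
            exact add_le_add (add_le_add le_rfl hVd0) hsupV
        _ = N * ((1 + Ia α) * ‖g 0‖ + M₂ + M₁ * (1 + Ia α)) := by ring
        _ ≤ N * Cb := by
            apply mul_le_mul_of_nonneg_left _ hN0
            rw [hCbdef]; linarith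
        _ = Cb * N := mul_comm _ _

end
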